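/- Linear convergence of three-operator splitting (Theorem 3): Let d ≥ 1 and let m_f, m_g, m_h ≥ 0 and L_f, L_g, L_h > 0. Let f, g, h : ℝ^d → ℝ be convex with h differentiable, and suppose that f, g, and h each belong to the class F(m,L) in the incremental quadratic-constraint sense: for all x, y and all subgradients p of f at x and q of f at y, ⟪p − q, x − y⟫ ≥ (m_f L_f/(m_f + L_f))‖x − y‖² + (1/(m_f + L_f))‖p − q‖², and the analogous inequalities for (g, m_g, L_g) (with subgradients of g) and for (h, m_h, L_h) (with p = ∇h(x), q = ∇h(y)). Suppose α, λ > 0, ρ ∈ (0,1), and σ₁, σ₂, σ₃ ≥ 0 are such that the 4×4 symmetric real matrix W₂ + σ₁Q₁ + σ₂Q₂ + σ₃Q₃ is negative semidefinite, where W₂ = [[λ², 0, −λ², −λ], [0,0,0,0], [−λ², 0, λ², λ], [−λ, 0, λ, 1−ρ²]], Q₁ = B_gᵀ·Q(m_g,L_g)·B_g with B_g = [[α,0,0,0],[−1,0,0,1]], Q₂ = B_hᵀ·Q(m_h,L_h)·B_h with B_h = [[α,0,0,0],[2,−1,0,−1]], Q₃ = B_fᵀ·Q(m_f,L_f)·B_f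 with B_f = [[0,0,α,0],[0,1,−1,0]], and Q(m,L) = [[−mL/(m+L), 1/2], [1/2, −1/(m+L)]]. Then along any TOS trajectory with stepsize α and relaxation λ that admits a TOS fixed point (z*, x*, y*, p_g*, p_f*), one has for every k ≥ 0: ‖z^k − z*‖² ≤ ρ^{2k} ‖z⁰ − z*‖². -/

import Mathlib

open scoped RealInnerProductSpace
open Matrix

/-- The matrix `Q(m, L)` defining the incremental quadratic constraint for `F(m, L)`. -/
noncomputable def Qml (m L : ℝ) : Matrix (Fin 2) (Fin 2) ℝ :=
  !![-m * L / (m + L), 1 / 2; 1 / 2, -1 / (m + L)]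

/-- The matrix `W₂` appearing in the linear-rate certificate. -/
noncomputable def W2mat (lam ρ : ℝ) : Matrix (Fin 4) (Fin 4) ℝ :=
  !![lam ^ 2, 0, -lam ^ 2, -lam;
     0, 0, 0, 0;
     -lam ^ 2, 0, lam ^ 2, lam;
     -lam, 0, lam, 1 - ρ ^ 2]

noncomputable def BgMat (α : ℝ) : Matrix (Fin 2) (Fin 4) ℝ := !![α, 0, 0, 0; -1, 0, 0, 1]

noncomputable def BhMat (α : ℝ) : Matrix (Fin 2) (Fin 4) ℝ := !![α, 0, 0, 0; 2, -1, 0, -1]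

noncomputable def BfMat (α : ℝ) : Matrix (Fin 2) (Fin 4) ℝ := !![0, 0, α, 0; 0, 1, -1, 0]

/-- `Q₁ = B_gᵀ · Q(m_g, L_g) · B_g`. -/
noncomputable def Q1mat (α m_g L_g : ℝ) : Matrix (Fin 4) (Fin 4) ℝ :=
  (BgMat α)ᵀ * Qml m_g L_g * BgMat α

/-- `Q₂ = B_hᵀ · Q(m_h, L_h) · B_h`. -/
noncomputable def Q2mat (α m_h L_h : ℝ) : Matrix (Fin 4) (Fin 4) ℝ :=
  (BhMat α)ᵀ * Qml m_h L_h * BhMat α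

/-- `Q₃ = B_fᵀ · Q(m_f, L_f) · B_f`. -/
noncomputable def Q3mat (α m_f L_f : ℝ) : Matrix (Fin 4) (Fin 4) ℝ :=
  (BfMat α)ᵀ * Qml m_f L_f * BfMat α

section Aux


variable {d n m : ℕ}

lemma inner_pi (x y : EuclideanSpace ℝ (Fin d)) : ⟪x, y⟫ = ∑ t, x t * y t := by
  simp [PiLp.inner_apply, RCLike.inner_apply]
  exact Finset.sum_congr rfl fun _ _ => mul_comm _ _

lemma norm_sq_pi (x : EuclideanSpace ℝ (Fin d)) : ‖x‖ ^ 2 = ∑ t, x t * x t := by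
  rw [← real_inner_self_eq_norm_sq, inner_pi]

lemma qf_coord (M : Matrix (Fin n) (Fin n) ℝ) (u : Fin n → EuclideanSpace ℝ (Fin d)) :
    ∑ i, ∑ j, M i j * ⟪u i, u j⟫ = ∑ t, (fun i => u i t) ⬝ᵥ (M *ᵥ fun i => u i t) := by
  simp only [inner_pi, Finset.mul_sum]
  rw [show (∑ i, ∑ j, ∑ t, M i j * (u i t * u j t))
      = ∑ i, ∑ t, ∑ j, M i j * (u i t * u j t) from
    Finset.sum_congr rfl fun i _ => Finset.sum_comm, Finset.sum_comm]
  refine Finset.sum_congr rfl fun t _ => ?_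
  simp only [dotProduct, Matrix.mulVec, Finset.mul_sum]
  exact Finset.sum_congr rfl fun i _ => Finset.sum_congr rfl fun j _ => by ring

lemma qf_conj (Q : Matrix (Fin m) (Fin m) ℝ) (B : Matrix (Fin m) (Fin n) ℝ)
    (u : Fin n → EuclideanSpace ℝ (Fin d)) :
    ∑ i, ∑ j, (Bᵀ * Q * B) i j * ⟪u i, u j⟫
      = ∑ k, ∑ l, Q k l * ⟪∑ i, B k i • u i, ∑ j, B l j • u j⟫ := by
  rw [qf_coord, qf_coord]
  refine Finset.sum_congr rfl fun t _ => ?_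
  have happ : (fun k => (∑ i, B k i • u i) t) = B *ᵥ (fun i => u i t) := by
    funext k
    rw [show ((∑ i, B k i • u i) t) = ∑ i, (B k i • u i) t from by rw [WithLp.ofLp_sum, Finset.sum_apply]]
    simp [Matrix.mulVec, dotProduct]
  rw [happ, ← Matrix.mulVec_mulVec, ← Matrix.mulVec_mulVec, Matrix.dotProduct_mulVec,
    Matrix.vecMul_transpose]

end Aux

set_option maxHeartbeats 1600000

/-- **Theorem 3** (linear convergence of three-operator splitting). If
`W₂ + σ₁Q₁ + σ₂Q₂ + σ₃Q₃ ⪯ 0` for some `ρ ∈ (0,1)`, then along any TOS trajectory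
admitting a fixed point, `‖z^k − z*‖² ≤ ρ^{2k} ‖z⁰ − z*‖²` for all `k`. -/
theorem tos_linear_convergence
    {d : ℕ} (hd : 1 ≤ d)
    (m_f m_g m_h L_f L_g L_h : ℝ)
    (hmf : 0 ≤ m_f) (hmg : 0 ≤ m_g) (hmh : 0 ≤ m_h)
    (hLf : 0 < L_f) (hLg : 0 < L_g) (hLh : 0 < L_h)
    (f g h : EuclideanSpace ℝ (Fin d) → ℝ)
    (hgrad : EuclideanSpace ℝ (Fin d) → EuclideanSpace ℝ (Fin d))
    (hf : ConvexOn ℝ Set.univ f) (hg : ConvexOn ℝ Set.univ g)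
    (hh : ConvexOn ℝ Set.univ h)
    (hdiff : ∀ x, HasGradientAt h (hgrad x) x)
    -- incremental quadratic constraints defining the classes F(m, L)
    (hQCf : ∀ x y p q : EuclideanSpace ℝ (Fin d),
      (∀ w, f x + ⟪p, w - x⟫ ≤ f w) → (∀ w, f y + ⟪q, w - y⟫ ≤ f w) →
      m_f * L_f / (m_f + L_f) * ‖x - y‖ ^ 2 + 1 / (m_f + L_f) * ‖p - q‖ ^ 2 ≤
        ⟪p - q, x - y⟫)
    (hQCg : ∀ x y p q : EuclideanSpace ℝ (Fin d),
      (∀ w, g x + ⟪p, w - x⟫ ≤ g w) → (∀ w, g y + ⟪q, w - y⟫ ≤ g w) →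
      m_g * L_g / (m_g + L_g) * ‖x - y‖ ^ 2 + 1 / (m_g + L_g) * ‖p - q‖ ^ 2 ≤
        ⟪p - q, x - y⟫)
    (hQCh : ∀ x y : EuclideanSpace ℝ (Fin d),
      m_h * L_h / (m_h + L_h) * ‖x - y‖ ^ 2
        + 1 / (m_h + L_h) * ‖hgrad x - hgrad y‖ ^ 2 ≤ ⟪hgrad x - hgrad y, x - y⟫)
    (α lam ρ σ₁ σ₂ σ₃ : ℝ)
    (hα : 0 < α) (hlam : 0 < lam) (hρ : ρ ∈ Set.Ioo (0 : ℝ) 1)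
    (hσ₁ : 0 ≤ σ₁) (hσ₂ : 0 ≤ σ₂) (hσ₃ : 0 ≤ σ₃)
    (hNSD : ∀ v : Fin 4 → ℝ,
      v ⬝ᵥ ((W2mat lam ρ + σ₁ • Q1mat α m_g L_g + σ₂ • Q2mat α m_h L_h
        + σ₃ • Q3mat α m_f L_f) *ᵥ v) ≤ 0)
    -- TOS trajectory
    (z xB y xA pg pf : ℕ → EuclideanSpace ℝ (Fin d))
    (hsubg : ∀ k w, g (xB k) + ⟪pg k, w - xB k⟫ ≤ g w)
    (hsubf : ∀ k w, f (xA k) + ⟪pf k, w - xA k⟫ ≤ f w)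
    (hxB : ∀ k, xB k = z k - α • pg k)
    (hy : ∀ k, y k = (2 : ℝ) • xB k - z k - α • hgrad (xB k))
    (hxA : ∀ k, xA k = y k - α • pf k)
    (hz : ∀ k, z (k + 1) = z k + lam • (xA k - xB k))
    -- TOS fixed point
    (zs xs ys pgs pfs : EuclideanSpace ℝ (Fin d))
    (hsubgs : ∀ w, g xs + ⟪pgs, w - xs⟫ ≤ g w)
    (hsubfs : ∀ w, f xs + ⟪pfs, w - xs⟫ ≤ f w)
    (hxs : xs = zs - α • pgs)
    (hys : ys = (2 : ℝ) • xs - zs - α • hgrad xs)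
    (hxAs : xs = ys - α • pfs) :
    ∀ k : ℕ, ‖z k - zs‖ ^ 2 ≤ ρ ^ (2 * k) * ‖z 0 - zs‖ ^ 2 := by
  have hαne : α ≠ 0 := ne_of_gt hα
  have step : ∀ k, ‖z (k + 1) - zs‖ ^ 2 ≤ ρ ^ 2 * ‖z k - zs‖ ^ 2 := by
    intro k
    set a := xB k - xs with ha
    set b := y k - ys with hb
    set c := xA k - xs with hc
    set e := z k - zs with he
    have hea : e - a = α • (pg k - pgs) := by
      rw [he, ha, hxB k, hxs]; module
    have hhd : (2 : ℝ) • a - b - e = α • (hgrad (xB k) - hgrad xs) := by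
      rw [ha, hb, he, hy k, hys]; module
    have hbc : b - c = α • (pf k - pfs) := by
      rw [hb, hc, hxA k, hxAs]; module
    have hz1 : z (k + 1) - zs = e + lam • (c - a) := by
      rw [hz k, ha, hc, he]; module
    set u : Fin 4 → EuclideanSpace ℝ (Fin d) :=
      ![α⁻¹ • a, α⁻¹ • b, α⁻¹ • c, α⁻¹ • e] with hu
    -- w-vectors for the three conjugated forms
    have hw_g0 : ∑ i, BgMat α 0 i • u i = a := by
      simp [hu, BgMat, Fin.sum_univ_four, smul_smul, mul_inv_cancel₀ hαne]
    have hw_g1 : ∑ i, BgMat α 1 i • u i = pg k - pgs := by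
      have h1 : ∑ i, BgMat α 1 i • u i = α⁻¹ • (e - a) := by
        simp [hu, BgMat, Fin.sum_univ_four]; module
      rw [h1, hea, smul_smul, inv_mul_cancel₀ hαne, one_smul]
    have hw_h0 : ∑ i, BhMat α 0 i • u i = a := by
      simp [hu, BhMat, Fin.sum_univ_four, smul_smul, mul_inv_cancel₀ hαne]
    have hw_h1 : ∑ i, BhMat α 1 i • u i = hgrad (xB k) - hgrad xs := by
      have h1 : ∑ i, BhMat α 1 i • u i = α⁻¹ • ((2 : ℝ) • a - b - e) := by
        simp [hu, BhMat, Fin.sum_univ_four]; module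
      rw [h1, hhd, smul_smul, inv_mul_cancel₀ hαne, one_smul]
    have hw_f0 : ∑ i, BfMat α 0 i • u i = c := by
      simp [hu, BfMat, Fin.sum_univ_four, smul_smul, mul_inv_cancel₀ hαne]
    have hw_f1 : ∑ i, BfMat α 1 i • u i = pf k - pfs := by
      have h1 : ∑ i, BfMat α 1 i • u i = α⁻¹ • (b - c) := by
        simp [hu, BfMat, Fin.sum_univ_four]; module
      rw [h1, hbc, smul_smul, inv_mul_cancel₀ hαne, one_smul]
    have hQ1 : 0 ≤ ∑ i, ∑ j, Q1mat α m_g L_g i j * ⟪u i, u j⟫ := by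
      rw [Q1mat, qf_conj]
      simp only [Fin.sum_univ_two]
      rw [hw_g0, hw_g1]
      have hqc := hQCg (xB k) xs (pg k) pgs (hsubg k) hsubgs
      rw [← ha] at hqc
      simp only [Qml, Matrix.cons_val', Matrix.cons_val_zero, Matrix.cons_val_one,
        Matrix.head_cons, Matrix.empty_val', Matrix.cons_val_fin_one, Matrix.head_fin_const,
        Matrix.of_apply]
      rw [real_inner_self_eq_norm_sq, real_inner_self_eq_norm_sq,
        real_inner_comm a (pg k - pgs)]
      have hcomm := real_inner_comm a (pg k - pgs)
      ring_nf at hqc ⊢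
      linarith [hqc, hcomm]
    have hQ2 : 0 ≤ ∑ i, ∑ j, Q2mat α m_h L_h i j * ⟪u i, u j⟫ := by
      rw [Q2mat, qf_conj]
      simp only [Fin.sum_univ_two]
      rw [hw_h0, hw_h1]
      have hqc := hQCh (xB k) xs
      rw [← ha] at hqc
      simp only [Qml, Matrix.cons_val', Matrix.cons_val_zero, Matrix.cons_val_one,
        Matrix.head_cons, Matrix.empty_val', Matrix.cons_val_fin_one, Matrix.head_fin_const,
        Matrix.of_apply]
      rw [real_inner_self_eq_norm_sq, real_inner_self_eq_norm_sq,
        real_inner_comm a (hgrad (xB k) - hgrad xs)]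
      have hcomm := real_inner_comm a (hgrad (xB k) - hgrad xs)
      ring_nf at hqc ⊢
      linarith [hqc, hcomm]
    have hQ3 : 0 ≤ ∑ i, ∑ j, Q3mat α m_f L_f i j * ⟪u i, u j⟫ := by
      rw [Q3mat, qf_conj]
      simp only [Fin.sum_univ_two]
      rw [hw_f0, hw_f1]
      have hqc := hQCf (xA k) xs (pf k) pfs (hsubf k) hsubfs
      rw [← hc] at hqc
      simp only [Qml, Matrix.cons_val', Matrix.cons_val_zero, Matrix.cons_val_one,
        Matrix.head_cons, Matrix.empty_val', Matrix.cons_val_fin_one, Matrix.head_fin_const,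
        Matrix.of_apply]
      rw [real_inner_self_eq_norm_sq, real_inner_self_eq_norm_sq,
        real_inner_comm c (pf k - pfs)]
      have hcomm := real_inner_comm c (pf k - pfs)
      ring_nf at hqc ⊢
      linarith [hqc, hcomm]
    have hW2 : ∑ i, ∑ j, W2mat lam ρ i j * ⟪u i, u j⟫
        = α⁻¹ ^ 2 * (‖z (k + 1) - zs‖ ^ 2 - ρ ^ 2 * ‖e‖ ^ 2) := by
      rw [qf_coord, hz1, norm_sq_pi, norm_sq_pi, Finset.mul_sum,
        ← Finset.sum_sub_distrib, Finset.mul_sum]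
      refine Finset.sum_congr rfl fun t _ => ?_
      simp only [hu, W2mat, dotProduct, Matrix.mulVec, Fin.sum_univ_four,
        Matrix.cons_val', Matrix.cons_val_zero, Matrix.cons_val_one, Matrix.head_cons,
        Matrix.empty_val', Matrix.cons_val_fin_one, Matrix.head_fin_const,
        Matrix.cons_val_two, Matrix.cons_val_three, Matrix.tail_cons,
        PiLp.add_apply, PiLp.sub_apply, PiLp.smul_apply, smul_eq_mul,
        Matrix.vecHead, Matrix.vecTail, Function.comp, Matrix.of_apply]
      field_simp
      simp only [Matrix.cons_val_succ, Matrix.cons_val_zero, PiLp.smul_apply, smul_eq_mul]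
      field_simp
      ring
    have htot : ∑ i, ∑ j, (W2mat lam ρ + σ₁ • Q1mat α m_g L_g + σ₂ • Q2mat α m_h L_h
        + σ₃ • Q3mat α m_f L_f) i j * ⟪u i, u j⟫ ≤ 0 := by
      rw [qf_coord]
      exact Finset.sum_nonpos fun t _ => hNSD _
    have hsplit : ∑ i, ∑ j, (W2mat lam ρ + σ₁ • Q1mat α m_g L_g + σ₂ • Q2mat α m_h L_h
        + σ₃ • Q3mat α m_f L_f) i j * ⟪u i, u j⟫
        = (∑ i, ∑ j, W2mat lam ρ i j * ⟪u i, u j⟫)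
          + σ₁ * (∑ i, ∑ j, Q1mat α m_g L_g i j * ⟪u i, u j⟫)
          + σ₂ * (∑ i, ∑ j, Q2mat α m_h L_h i j * ⟪u i, u j⟫)
          + σ₃ * (∑ i, ∑ j, Q3mat α m_f L_f i j * ⟪u i, u j⟫) := by
      simp only [Matrix.add_apply, Matrix.smul_apply, smul_eq_mul, add_mul, mul_assoc,
        Finset.sum_add_distrib, Finset.mul_sum]
    have hkey : α⁻¹ ^ 2 * (‖z (k + 1) - zs‖ ^ 2 - ρ ^ 2 * ‖e‖ ^ 2) ≤ 0 := by
      rw [← hW2]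
      linarith [htot, hsplit, mul_nonneg hσ₁ hQ1, mul_nonneg hσ₂ hQ2, mul_nonneg hσ₃ hQ3]
    have hpos : 0 < α⁻¹ ^ 2 := by positivity
    by_contra hcon
    push_neg at hcon
    have : 0 < α⁻¹ ^ 2 * (‖z (k + 1) - zs‖ ^ 2 - ρ ^ 2 * ‖e‖ ^ 2) :=
      mul_pos hpos (by linarith)
    linarith
  intro k
  induction k with
  | zero => simp
  | succ n ih =>
    calc ‖z (n + 1) - zs‖ ^ 2 ≤ ρ ^ 2 * ‖z n - zs‖ ^ 2 := step n
      _ ≤ ρ ^ 2 * (ρ ^ (2 * n) * ‖z 0 - zs‖ ^ 2) :=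
        mul_le_mul_of_nonneg_left ih (sq_nonneg ρ)
      _ = ρ ^ (2 * (n + 1)) * ‖z 0 - zs‖ ^ 2 := by
        rw [show 2 * (n + 1) = 2 * n + 2 by ring, pow_add]; ring
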